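/- arXiv:2508.01806 — 3 statements merged into one kernel-verified Lean document; each statement's English description precedes it below -/
import Mathlib

section
/- There exists a constant C > 0, depending only on T, γ, ħ, μ_B, g, the matrices S_{1i}, S_{2i}, H_hfi, K, the bounds m_i, M_i, |v₀| and max_l |ψ_T^l|, such that for all u ∈ 𝒱 and all δu ∈ L²((0,T); ℝ³) with u + δu ∈ 𝒱, and every l = 1, …, s, one has sup_{t ∈ [0,T]} |ψ^l(t; u + δu) − ψ^l(t; u)| ≤ C ∫₀ᵀ |δu(τ)| dτ. -/
open MeasureTheory Set

noncomputable section

/-- ℝ³ with the Euclidean norm. -/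
abbrev E3 : Type := EuclideanSpace ℝ (Fin 3)

/-- membership in the box `V = ∏ [lo i, hi i]`. -/
def inBox (lo hi : Fin 3 → ℝ) (w : E3) : Prop :=
  ∀ i, lo i ≤ w i ∧ w i ≤ hi i

/-- the admissible control set 𝒱 : L²((0,T);ℝ³) functions with values in the box a.e. -/
def Adm (T : ℝ) (lo hi : Fin 3 → ℝ) (u : ℝ → E3) : Prop :=
  MemLp u 2 (volume.restrict (Set.Ioc (0:ℝ) T)) ∧
    ∀ᵐ t ∂(volume.restrict (Set.Ioc (0:ℝ) T)), inBox lo hi (u t)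

/-- the filtered field  v(t;u) = e^{−γt}(v₀ + ∫₀ᵗ γ e^{γτ} u(τ) dτ). -/
def vfield (γ : ℝ) (v0 : E3) (u : ℝ → E3) (t : ℝ) : E3 :=
  Real.exp (-(γ * t)) • (v0 + ∫ τ in Set.Ioc (0:ℝ) t, (γ * Real.exp (γ * τ)) • u τ)

/-- the inner product ⟨a,b⟩ = ∑ conj(a j) * b j on ℂⁿ. -/
def cInner {n : ℕ} (a b : Fin n → ℂ) : ℂ := ∑ j, (starRingEnd ℂ) (a j) * b j

/-- the Euclidean norm on ℂⁿ. -/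
def cNorm {n : ℕ} (a : Fin n → ℂ) : ℝ := Real.sqrt (∑ j, Complex.normSq (a j))

/-- Zeeman term H_Z(v) = μB g ∑ᵢ vᵢ (S1ᵢ + S2ᵢ). -/
def HZmat {n : ℕ} (μB g : ℝ) (S1 S2 : Fin 3 → Matrix (Fin n) (Fin n) ℂ) (v : E3) :
    Matrix (Fin n) (Fin n) ℂ :=
  ((μB * g : ℝ) : ℂ) • ∑ i, ((v i : ℝ) : ℂ) • (S1 i + S2 i)

/-- K = (k_S P_S + k_T P_T)/2. -/
def Kmat {n : ℕ} (kS kT : ℝ) (PS PT : Matrix (Fin n) (Fin n) ℂ) : Matrix (Fin n) (Fin n) ℂ :=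
  ((1 : ℂ) / 2) • ((kS : ℂ) • PS + (kT : ℂ) • PT)

/-- H(v) = H_Z(v) + H_hfi − iK. -/
def Ham {n : ℕ} (μB g kS kT : ℝ) (S1 S2 : Fin 3 → Matrix (Fin n) (Fin n) ℂ)
    (Hhfi PS PT : Matrix (Fin n) (Fin n) ℂ) (v : E3) : Matrix (Fin n) (Fin n) ℂ :=
  HZmat μB g S1 S2 v + Hhfi - Complex.I • Kmat kS kT PS PT

/-- H*(v) = H_Z(v) + H_hfi + iK. -/
def HamStar {n : ℕ} (μB g kS kT : ℝ) (S1 S2 : Fin 3 → Matrix (Fin n) (Fin n) ℂ)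
    (Hhfi PS PT : Matrix (Fin n) (Fin n) ℂ) (v : E3) : Matrix (Fin n) (Fin n) ℂ :=
  HZmat μB g S1 S2 v + Hhfi + Complex.I • Kmat kS kT PS PT

/-- ψ solves iħ ψ' = Hm(t) ψ, ψ(0) = ψ0 (equivalently ψ' = (−i/ħ) Hm(t) ψ). -/
def IsSchrodingerSol {n : ℕ} (hbar : ℝ) (Hm : ℝ → Matrix (Fin n) (Fin n) ℂ)
    (ψ0 : Fin n → ℂ) (ψ : ℝ → Fin n → ℂ) : Prop :=
  ψ 0 = ψ0 ∧ ∀ t : ℝ, HasDerivAt ψ ((-Complex.I / (hbar : ℂ)) • (Hm t).mulVec (ψ t)) t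

/-- χ solves iħ χ' = Hm(t) χ − i (k_S/2) P_S ψ(t), χ(T) = 0. -/
def IsAdjointSol {n : ℕ} (T hbar kS : ℝ) (Hm : ℝ → Matrix (Fin n) (Fin n) ℂ)
    (PS : Matrix (Fin n) (Fin n) ℂ) (ψ χ : ℝ → Fin n → ℂ) : Prop :=
  χ T = 0 ∧ ∀ t : ℝ, HasDerivAt χ
    ((-Complex.I / (hbar : ℂ)) •
      ((Hm t).mulVec (χ t) - (Complex.I * ((kS : ℂ) / 2)) • PS.mulVec (ψ t))) t

/-- (ψ^l)_{l} is the family of state trajectories for control u. -/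
def SchroSol {n s : ℕ} (γ hbar μB g kS kT : ℝ)
    (S1 S2 : Fin 3 → Matrix (Fin n) (Fin n) ℂ) (Hhfi PS PT : Matrix (Fin n) (Fin n) ℂ)
    (v0 : E3) (ψT : Fin s → Fin n → ℂ) (u : ℝ → E3) (ψ : Fin s → ℝ → Fin n → ℂ) : Prop :=
  ∀ l, IsSchrodingerSol hbar
    (fun t => Ham μB g kS kT S1 S2 Hhfi PS PT (vfield γ v0 u t)) (ψT l) (ψ l)

/-- (χ^l)_{l} is the family of adjoint trajectories for control u and states ψ. -/
def AdjSol {n s : ℕ} (T γ hbar μB g kS kT : ℝ)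
    (S1 S2 : Fin 3 → Matrix (Fin n) (Fin n) ℂ) (Hhfi PS PT : Matrix (Fin n) (Fin n) ℂ)
    (v0 : E3) (u : ℝ → E3) (ψ χ : Fin s → ℝ → Fin n → ℂ) : Prop :=
  ∀ l, IsAdjointSol T hbar kS
    (fun t => HamStar μB g kS kT S1 S2 Hhfi PS PT (vfield γ v0 u t)) PS (ψ l) (χ l)

/-- the cost functional J expressed through the trajectories:
J = (k_S/(2s)) ∑_l ∫₀ᵀ ⟨ψ^l, P_S ψ^l⟩ dt. -/
def cost {n s : ℕ} (T kS : ℝ) (PS : Matrix (Fin n) (Fin n) ℂ)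
    (ψ : Fin s → ℝ → Fin n → ℂ) : ℝ :=
  (kS / (2 * (s : ℝ))) * ∑ l, ∫ t in (0:ℝ)..T, (cInner (ψ l t) (PS.mulVec (ψ l t))).re

/-- the switching function σ_{u,i}(t) = (2γμ_Bg/s) ∑_l ∫_t^T Im⟨χ^l(τ),(S1ᵢ+S2ᵢ)ψ^l(τ)⟩ e^{γ(t−τ)} dτ. -/
def swFn {n s : ℕ} (T γ μB g : ℝ) (S1 S2 : Fin 3 → Matrix (Fin n) (Fin n) ℂ)
    (ψ χ : Fin s → ℝ → Fin n → ℂ) (i : Fin 3) (t : ℝ) : ℝ :=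
  (2 * γ * μB * g / (s : ℝ)) * ∑ l, ∫ τ in t..T,
    (cInner (χ l τ) ((S1 i + S2 i).mulVec (ψ l τ))).im * Real.exp (γ * (t - τ))

namespace Stmt3Aux

/-- crude matrix bound -/
def mbound {n : ℕ} (M : Matrix (Fin n) (Fin n) ℂ) : ℝ := ∑ j, ∑ k, ‖M j k‖

lemma mbound_nonneg {n : ℕ} (M : Matrix (Fin n) (Fin n) ℂ) : 0 ≤ mbound M :=
  Finset.sum_nonneg fun _ _ => Finset.sum_nonneg fun _ _ => norm_nonneg _

lemma norm_mulVec_le {n : ℕ} (M : Matrix (Fin n) (Fin n) ℂ) (x : Fin n → ℂ) :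
    ‖M.mulVec x‖ ≤ mbound M * ‖x‖ := by
  rcases Nat.eq_zero_or_pos n with h | h
  · subst h
    have h0 : M.mulVec x = 0 := by ext j; exact j.elim0
    rw [h0, norm_zero]
    exact mul_nonneg (mbound_nonneg M) (norm_nonneg x)
  have hnn : 0 ≤ mbound M * ‖x‖ := mul_nonneg (mbound_nonneg M) (norm_nonneg _)
  rw [pi_norm_le_iff_of_nonneg hnn]
  intro j
  calc ‖M.mulVec x j‖ = ‖∑ k, M j k * x k‖ := by simp [Matrix.mulVec, dotProduct]
    _ ≤ ∑ k, ‖M j k * x k‖ := norm_sum_le _ _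
    _ ≤ ∑ k, ‖M j k‖ * ‖x‖ := by
        refine Finset.sum_le_sum fun k _ => ?_
        rw [norm_mul]
        exact mul_le_mul_of_nonneg_left (norm_le_pi_norm x k) (norm_nonneg _)
    _ = (∑ k, ‖M j k‖) * ‖x‖ := by rw [Finset.sum_mul]
    _ ≤ mbound M * ‖x‖ := by
        refine mul_le_mul_of_nonneg_right ?_ (norm_nonneg _)
        exact Finset.single_le_sum (f := fun j => ∑ k, ‖M j k‖)
          (fun _ _ => Finset.sum_nonneg fun _ _ => norm_nonneg _) (Finset.mem_univ j)

lemma mbound_add_le {n : ℕ} (A B : Matrix (Fin n) (Fin n) ℂ) :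
    mbound (A + B) ≤ mbound A + mbound B := by
  unfold mbound
  rw [← Finset.sum_add_distrib]
  refine Finset.sum_le_sum fun j _ => ?_
  rw [← Finset.sum_add_distrib]
  exact Finset.sum_le_sum fun k _ => norm_add_le _ _

lemma mbound_sub_le {n : ℕ} (A B : Matrix (Fin n) (Fin n) ℂ) :
    mbound (A - B) ≤ mbound A + mbound B := by
  unfold mbound
  rw [← Finset.sum_add_distrib]
  refine Finset.sum_le_sum fun j _ => ?_
  rw [← Finset.sum_add_distrib]
  exact Finset.sum_le_sum fun k _ => norm_sub_le _ _

lemma mbound_smul {n : ℕ} (c : ℂ) (A : Matrix (Fin n) (Fin n) ℂ) :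
    mbound (c • A) = ‖c‖ * mbound A := by
  simp [mbound, Finset.mul_sum, norm_mul]

lemma mbound_sum_le {n : ℕ} {ι : Type*} (t : Finset ι) (f : ι → Matrix (Fin n) (Fin n) ℂ) :
    mbound (∑ i ∈ t, f i) ≤ ∑ i ∈ t, mbound (f i) := by
  classical
  induction t using Finset.induction_on with
  | empty => simp [mbound]
  | insert _ _ h ih =>
      rw [Finset.sum_insert h, Finset.sum_insert h]
      exact le_trans (mbound_add_le _ _) (by linarith)

lemma abs_coord_le_norm (w : E3) (i : Fin 3) : |w i| ≤ ‖w‖ := by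
  rw [EuclideanSpace.norm_eq]
  rw [show |w i| = Real.sqrt (|w i| ^ 2) by rw [Real.sqrt_sq (abs_nonneg _)]]
  apply Real.sqrt_le_sqrt
  calc |w i| ^ 2 = ‖w i‖ ^ 2 := by rw [Real.norm_eq_abs]
    _ ≤ ∑ j, ‖w j‖ ^ 2 := Finset.single_le_sum (f := fun j => ‖w j‖ ^ 2)
        (fun _ _ => sq_nonneg _) (Finset.mem_univ i)

lemma cNorm_le_sqrt_mul {n : ℕ} (a : Fin n → ℂ) :
    Real.sqrt (∑ j, Complex.normSq (a j)) ≤ Real.sqrt n * ‖a‖ := by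
  rw [show Real.sqrt n * ‖a‖ = Real.sqrt ((n : ℝ) * ‖a‖ ^ 2) by
    rw [Real.sqrt_mul (Nat.cast_nonneg n), Real.sqrt_sq (norm_nonneg _)]]
  apply Real.sqrt_le_sqrt
  calc ∑ j, Complex.normSq (a j) = ∑ j, ‖a j‖ ^ 2 := by
        refine Finset.sum_congr rfl fun j _ => ?_
        rw [Complex.normSq_eq_norm_sq]
    _ ≤ ∑ _j : Fin n, ‖a‖ ^ 2 := Finset.sum_le_sum fun j _ =>
        pow_le_pow_left₀ (norm_nonneg _) (norm_le_pi_norm a j) 2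
    _ = (n : ℝ) * ‖a‖ ^ 2 := by simp [Finset.sum_const]


/-- radius bound for the box -/
def boxR (lo hi : Fin 3 → ℝ) : ℝ := Real.sqrt (∑ i, max |lo i| |hi i| ^ 2)

lemma boxR_nonneg (lo hi : Fin 3 → ℝ) : 0 ≤ boxR lo hi := Real.sqrt_nonneg _

lemma norm_le_of_inBox {lo hi : Fin 3 → ℝ} {w : E3} (h : inBox lo hi w) :
    ‖w‖ ≤ boxR lo hi := by
  rw [EuclideanSpace.norm_eq]
  apply Real.sqrt_le_sqrt
  refine Finset.sum_le_sum fun i _ => ?_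
  have hb : |w i| ≤ max |lo i| |hi i| := by
    rcases h i with ⟨h1, h2⟩
    rw [abs_le]
    refine ⟨le_trans (neg_le_neg (le_max_left _ _)) (le_trans (neg_abs_le _) h1), ?_⟩
    exact le_trans h2 (le_trans (le_abs_self _) (le_max_right _ _))
  calc ‖w i‖ ^ 2 = |w i| ^ 2 := by rw [Real.norm_eq_abs]
    _ ≤ max |lo i| |hi i| ^ 2 := pow_le_pow_left₀ (abs_nonneg _) hb 2

lemma mbound_HZ {n : ℕ} {μB g : ℝ} (hμg : 0 ≤ μB * g)
    (S1 S2 : Fin 3 → Matrix (Fin n) (Fin n) ℂ) (v : E3) :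
    mbound (HZmat μB g S1 S2 v) ≤ μB * g * ‖v‖ * (∑ i, mbound (S1 i + S2 i)) := by
  unfold HZmat
  rw [mbound_smul]
  have h1 : mbound (∑ i, ((v i : ℝ) : ℂ) • (S1 i + S2 i))
      ≤ ‖v‖ * ∑ i, mbound (S1 i + S2 i) := by
    refine le_trans (mbound_sum_le _ _) ?_
    rw [Finset.mul_sum]
    refine Finset.sum_le_sum fun i _ => ?_
    rw [mbound_smul]
    refine mul_le_mul_of_nonneg_right ?_ (mbound_nonneg _)
    rw [Complex.norm_real, Real.norm_eq_abs]
    exact abs_coord_le_norm v i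
  have h2 : ‖((μB * g : ℝ) : ℂ)‖ = μB * g := by
    rw [Complex.norm_real, Real.norm_eq_abs, abs_of_nonneg hμg]
  rw [h2]
  exact le_trans (mul_le_mul_of_nonneg_left h1 hμg) (le_of_eq (by ring))

lemma HZ_sub {n : ℕ} (μB g : ℝ) (S1 S2 : Fin 3 → Matrix (Fin n) (Fin n) ℂ) (v w : E3) :
    HZmat μB g S1 S2 v - HZmat μB g S1 S2 w = HZmat μB g S1 S2 (v - w) := by
  unfold HZmat
  rw [← smul_sub, ← Finset.sum_sub_distrib]
  congr 1
  refine Finset.sum_congr rfl fun i _ => ?_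
  rw [← sub_smul, ← Complex.ofReal_sub]
  norm_num

lemma Ham_sub {n : ℕ} (μB g kS kT : ℝ) (S1 S2 : Fin 3 → Matrix (Fin n) (Fin n) ℂ)
    (Hhfi PS PT : Matrix (Fin n) (Fin n) ℂ) (v w : E3) :
    Ham μB g kS kT S1 S2 Hhfi PS PT v - Ham μB g kS kT S1 S2 Hhfi PS PT w
      = HZmat μB g S1 S2 (v - w) := by
  unfold Ham
  rw [← HZ_sub μB g S1 S2 v w]
  abel

lemma mbound_Ham_le {n : ℕ} {μB g : ℝ} (hμg : 0 ≤ μB * g) (kS kT : ℝ)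
    (S1 S2 : Fin 3 → Matrix (Fin n) (Fin n) ℂ)
    (Hhfi PS PT : Matrix (Fin n) (Fin n) ℂ) (v : E3) :
    mbound (Ham μB g kS kT S1 S2 Hhfi PS PT v)
      ≤ μB * g * ‖v‖ * (∑ i, mbound (S1 i + S2 i)) + mbound Hhfi
        + mbound (Kmat kS kT PS PT) := by
  unfold Ham
  refine le_trans (mbound_sub_le _ _) ?_
  rw [mbound_smul, Complex.norm_I, one_mul]
  have h1 := mbound_add_le (HZmat μB g S1 S2 v) Hhfi
  have h2 := mbound_HZ hμg S1 S2 v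
  linarith

lemma norm_neg_I_div {hbar : ℝ} (h : 0 < hbar) : ‖(-Complex.I / (hbar : ℂ))‖ = 1 / hbar := by
  rw [norm_div, norm_neg, Complex.norm_I, Complex.norm_real, Real.norm_eq_abs, abs_of_pos h]

lemma weighted_integrable {γ T : ℝ} (hγ : 0 < γ) {u : ℝ → E3}
    (hu : IntegrableOn u (Set.Ioc 0 T) volume) {t : ℝ} (ht : t ≤ T) :
    IntegrableOn (fun τ => (γ * Real.exp (γ * τ)) • u τ) (Set.Ioc 0 t) volume := by
  have hu' : IntegrableOn u (Set.Ioc 0 t) volume := hu.mono_set (Set.Ioc_subset_Ioc_right ht)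
  refine Integrable.mono' (hu'.norm.const_mul (γ * Real.exp (γ * t))) ?_ ?_
  · exact ((continuous_const.mul (Real.continuous_exp.comp
      (continuous_const.mul continuous_id))).aestronglyMeasurable).smul hu'.aestronglyMeasurable
  · rw [ae_restrict_iff' measurableSet_Ioc]
    refine Filter.Eventually.of_forall fun τ hτ => ?_
    rw [norm_smul, Real.norm_eq_abs]
    have hc : |γ * Real.exp (γ * τ)| ≤ γ * Real.exp (γ * t) := by
      rw [abs_of_pos (mul_pos hγ (Real.exp_pos _))]
      exact mul_le_mul_of_nonneg_left
        (Real.exp_le_exp.2 (mul_le_mul_of_nonneg_left hτ.2 hγ.le)) hγ.le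
    exact mul_le_mul_of_nonneg_right hc (norm_nonneg _)

lemma weighted_norm_int_le {γ T t : ℝ} (hγ : 0 < γ) (ht : t ≤ T)
    {w : ℝ → E3} (hw : IntegrableOn w (Set.Ioc 0 T) volume) :
    ‖∫ τ in Set.Ioc (0:ℝ) t, (γ * Real.exp (γ * τ)) • w τ‖
      ≤ γ * Real.exp (γ * t) * ∫ τ in Set.Ioc (0:ℝ) T, ‖w τ‖ := by
  have hw' : IntegrableOn w (Set.Ioc 0 t) volume := hw.mono_set (Set.Ioc_subset_Ioc_right ht)
  have hwi := weighted_integrable hγ hw ht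
  calc ‖∫ τ in Set.Ioc (0:ℝ) t, (γ * Real.exp (γ * τ)) • w τ‖
      ≤ ∫ τ in Set.Ioc (0:ℝ) t, ‖(γ * Real.exp (γ * τ)) • w τ‖ :=
        norm_integral_le_integral_norm _
    _ ≤ ∫ τ in Set.Ioc (0:ℝ) t, γ * Real.exp (γ * t) * ‖w τ‖ := by
        refine setIntegral_mono_on hwi.norm (hw'.norm.const_mul _) measurableSet_Ioc
          fun τ hτ => ?_
        rw [norm_smul, Real.norm_eq_abs, abs_of_pos (mul_pos hγ (Real.exp_pos _))]
        exact mul_le_mul_of_nonneg_right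
          (mul_le_mul_of_nonneg_left
            (Real.exp_le_exp.2 (mul_le_mul_of_nonneg_left hτ.2 hγ.le)) hγ.le)
          (norm_nonneg _)
    _ = γ * Real.exp (γ * t) * ∫ τ in Set.Ioc (0:ℝ) t, ‖w τ‖ := by
        simpa [smul_eq_mul] using integral_smul (μ := volume.restrict (Set.Ioc (0:ℝ) t))
          (γ * Real.exp (γ * t)) (fun τ => ‖w τ‖)
    _ ≤ γ * Real.exp (γ * t) * ∫ τ in Set.Ioc (0:ℝ) T, ‖w τ‖ := by
        refine mul_le_mul_of_nonneg_left ?_ (mul_nonneg hγ.le (Real.exp_pos _).le)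
        exact setIntegral_mono_set hw.norm
          (Filter.Eventually.of_forall fun τ => norm_nonneg _)
          (HasSubset.Subset.eventuallyLE (Set.Ioc_subset_Ioc_right ht))

lemma vfield_norm_le {γ T ρ : ℝ} (hγ : 0 < γ) (hT : 0 < T) (hρ : 0 ≤ ρ) (v0 : E3)
    {u : ℝ → E3} (hu : IntegrableOn u (Set.Ioc 0 T) volume)
    (hb : ∀ᵐ τ ∂(volume.restrict (Set.Ioc (0:ℝ) T)), ‖u τ‖ ≤ ρ)
    {t : ℝ} (ht0 : 0 ≤ t) (ht : t ≤ T) :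
    ‖vfield γ v0 u t‖ ≤ ‖v0‖ + γ * T * ρ := by
  have hexp1 : Real.exp (-(γ * t)) ≤ 1 :=
    Real.exp_le_one_iff.2 (neg_nonpos.2 (mul_nonneg hγ.le ht0))
  have hI0 : (0:ℝ) ≤ ∫ τ in Set.Ioc (0:ℝ) T, ‖u τ‖ :=
    integral_nonneg fun τ => norm_nonneg _
  have hIu : (∫ τ in Set.Ioc (0:ℝ) T, ‖u τ‖) ≤ ρ * T := by
    have hconst : IntegrableOn (fun _ : ℝ => ρ) (Set.Ioc 0 T) volume := integrableOn_const
      (by rw [Real.volume_Ioc]; exact ENNReal.ofReal_ne_top)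
    calc (∫ τ in Set.Ioc (0:ℝ) T, ‖u τ‖) ≤ ∫ _τ in Set.Ioc (0:ℝ) T, ρ :=
          integral_mono_ae hu.norm hconst hb
      _ = ρ * T := by
          rw [setIntegral_const, smul_eq_mul, measureReal_def, Real.volume_Ioc,
            ENNReal.toReal_ofReal (by linarith : (0:ℝ) ≤ T - 0)]
          ring
  calc ‖vfield γ v0 u t‖
      = Real.exp (-(γ * t)) * ‖v0 + ∫ τ in Set.Ioc (0:ℝ) t, (γ * Real.exp (γ * τ)) • u τ‖ := by
        rw [vfield, norm_smul, Real.norm_eq_abs, abs_of_pos (Real.exp_pos _)]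
    _ ≤ Real.exp (-(γ * t)) *
        (‖v0‖ + γ * Real.exp (γ * t) * ∫ τ in Set.Ioc (0:ℝ) T, ‖u τ‖) := by
        refine mul_le_mul_of_nonneg_left ?_ (Real.exp_pos _).le
        exact le_trans (norm_add_le _ _)
          (add_le_add le_rfl (weighted_norm_int_le hγ ht hu))
    _ ≤ ‖v0‖ + γ * T * ρ := by
        rw [mul_add]
        have he : Real.exp (-(γ * t)) * Real.exp (γ * t) = 1 := by
          rw [← Real.exp_add]; simp
        have h2 : Real.exp (-(γ * t)) * (γ * Real.exp (γ * t) * ∫ τ in Set.Ioc (0:ℝ) T, ‖u τ‖)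
            = γ * ∫ τ in Set.Ioc (0:ℝ) T, ‖u τ‖ := by
          rw [show Real.exp (-(γ * t)) * (γ * Real.exp (γ * t) * ∫ τ in Set.Ioc (0:ℝ) T, ‖u τ‖)
              = (Real.exp (-(γ * t)) * Real.exp (γ * t)) * (γ * ∫ τ in Set.Ioc (0:ℝ) T, ‖u τ‖)
            from by ring, he, one_mul]
        rw [h2]
        have h1 : Real.exp (-(γ * t)) * ‖v0‖ ≤ ‖v0‖ := by
          nlinarith [norm_nonneg v0]
        have h3 : γ * (∫ τ in Set.Ioc (0:ℝ) T, ‖u τ‖) ≤ γ * (ρ * T) :=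
          mul_le_mul_of_nonneg_left hIu hγ.le
        nlinarith

lemma vfield_sub {γ T : ℝ} (hγ : 0 < γ) {u δu : ℝ → E3}
    (hu : IntegrableOn u (Set.Ioc 0 T) volume) (hδ : IntegrableOn δu (Set.Ioc 0 T) volume)
    (v0 : E3) {t : ℝ} (ht : t ≤ T) :
    vfield γ v0 (u + δu) t - vfield γ v0 u t
      = Real.exp (-(γ * t)) • ∫ τ in Set.Ioc (0:ℝ) t, (γ * Real.exp (γ * τ)) • δu τ := by
  unfold vfield
  rw [← smul_sub]
  congr 1
  have h1 := weighted_integrable hγ hu ht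
  have h2 := weighted_integrable hγ hδ ht
  have h3 : (fun τ => (γ * Real.exp (γ * τ)) • (u + δu) τ)
      = fun τ => (γ * Real.exp (γ * τ)) • u τ + (γ * Real.exp (γ * τ)) • δu τ := by
    funext τ; rw [Pi.add_apply, smul_add]
  rw [h3, integral_add h1 h2]
  abel

lemma apriori_bound {n : ℕ} {T K1 Ψ : ℝ} (hK : 0 < K1) {f f' : ℝ → Fin n → ℂ}
    (hd : ∀ t, HasDerivAt f (f' t) t)
    (hb : ∀ x ∈ Set.Ico (0:ℝ) T, ‖f' x‖ ≤ K1 * ‖f x‖)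
    (h0 : ‖f 0‖ ≤ Ψ) :
    ∀ t ∈ Set.Icc (0:ℝ) T, ‖f t‖ ≤ Ψ * Real.exp (K1 * T) := by
  intro t htm
  have hΨ0 : 0 ≤ Ψ := le_trans (norm_nonneg _) h0
  have hcont : ContinuousOn f (Set.Icc 0 T) :=
    (continuous_iff_continuousAt.2 fun x => (hd x).continuousAt).continuousOn
  have h := norm_le_gronwallBound_of_norm_deriv_right_le (ε := 0) hcont
    (fun x _ => (hd x).hasDerivWithinAt) h0
    (fun x hx => by rw [add_zero]; exact hb x hx) t htm
  rw [sub_zero, gronwallBound_ε0] at h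
  refine h.trans (mul_le_mul_of_nonneg_left (Real.exp_le_exp.2 ?_) hΨ0)
  exact mul_le_mul_of_nonneg_left htm.2 hK.le

lemma grow_bound {n : ℕ} {T K1 ε : ℝ} (hK : 0 < K1) (hε : 0 ≤ ε) {f f' : ℝ → Fin n → ℂ}
    (hd : ∀ t, HasDerivAt f (f' t) t)
    (hb : ∀ x ∈ Set.Ico (0:ℝ) T, ‖f' x‖ ≤ K1 * ‖f x‖ + ε)
    (h0 : f 0 = 0) :
    ∀ t ∈ Set.Icc (0:ℝ) T, ‖f t‖ ≤ ε / K1 * (Real.exp (K1 * T) - 1) := by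
  intro t htm
  have hcont : ContinuousOn f (Set.Icc 0 T) :=
    (continuous_iff_continuousAt.2 fun x => (hd x).continuousAt).continuousOn
  have h := norm_le_gronwallBound_of_norm_deriv_right_le hcont
    (fun x _ => (hd x).hasDerivWithinAt) (by rw [h0, norm_zero]) hb t htm
  rw [sub_zero, gronwallBound_of_K_ne_0 hK.ne'] at h
  simp only [zero_mul, zero_add] at h
  refine h.trans (mul_le_mul_of_nonneg_left ?_ (div_nonneg hε hK.le))
  exact sub_le_sub_right (Real.exp_le_exp.2 (mul_le_mul_of_nonneg_left htm.2 hK.le)) 1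

end Stmt3Aux

set_option maxHeartbeats 2000000 in
/-- uniform estimate of the state increment by the L¹ norm of the
control increment. -/
theorem stmt_3
    {n s : ℕ} (hs : 0 < s)
    (T γ hbar μB g kS kT : ℝ) (hT : 0 < T) (hγ : 0 < γ) (hhbar : 0 < hbar)
    (hμB : 0 < μB) (hg : 0 < g) (hkS : 0 < kS) (hkT : 0 < kT)
    (S1 S2 : Fin 3 → Matrix (Fin n) (Fin n) ℂ) (Hhfi PS PT : Matrix (Fin n) (Fin n) ℂ)
    (hS1 : ∀ i, (S1 i).IsHermitian) (hS2 : ∀ i, (S2 i).IsHermitian)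
    (hHhfi : Hhfi.IsHermitian) (hPS : PS.IsHermitian) (hPT : PT.IsHermitian)
    (lo hi : Fin 3 → ℝ) (hbox : ∀ i, lo i ≤ hi i)
    (v0 : E3) (ψT : Fin s → Fin n → ℂ) :
    ∃ C > 0, ∀ u δu : ℝ → E3, Adm T lo hi u → Adm T lo hi (u + δu) →
      ∀ ψ ψb : Fin s → ℝ → Fin n → ℂ,
        SchroSol γ hbar μB g kS kT S1 S2 Hhfi PS PT v0 ψT u ψ →
        SchroSol γ hbar μB g kS kT S1 S2 Hhfi PS PT v0 ψT (u + δu) ψb →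
        ∀ l, ∀ t ∈ Set.Icc (0:ℝ) T,
          cNorm (ψb l t - ψ l t) ≤ C * ∫ τ in Set.Ioc (0:ℝ) T, ‖δu τ‖ := by
  classical
  have hμg : 0 ≤ μB * g := (mul_pos hμB hg).le
  set ρ := Stmt3Aux.boxR lo hi with hρdef
  have hρ0 : 0 ≤ ρ := Stmt3Aux.boxR_nonneg lo hi
  set cS := ∑ i, Stmt3Aux.mbound (S1 i + S2 i) with hcSdef
  have hcS0 : 0 ≤ cS := Finset.sum_nonneg fun i _ => Stmt3Aux.mbound_nonneg _
  set Vb := ‖v0‖ + γ * T * ρ with hVbdef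
  have hVb0 : 0 ≤ Vb := add_nonneg (norm_nonneg _)
    (mul_nonneg (mul_nonneg hγ.le hT.le) hρ0)
  set M0 := μB * g * Vb * cS + Stmt3Aux.mbound Hhfi + Stmt3Aux.mbound (Kmat kS kT PS PT)
    with hM0def
  have hM00 : 0 ≤ M0 := add_nonneg (add_nonneg
    (mul_nonneg (mul_nonneg hμg hVb0) hcS0) (Stmt3Aux.mbound_nonneg _))
    (Stmt3Aux.mbound_nonneg _)
  set K1 := (1 / hbar) * M0 + 1 with hK1def
  have hK1 : 0 < K1 := by
    rw [hK1def]
    have : 0 ≤ (1 / hbar) * M0 := mul_nonneg (by positivity) hM00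
    linarith
  set Ψ := ∑ l : Fin s, ‖ψT l‖ with hΨdef
  have hΨ0 : 0 ≤ Ψ := Finset.sum_nonneg fun _ _ => norm_nonneg _
  set B := Ψ * Real.exp (K1 * T) with hBdef
  have hB0 : 0 ≤ B := mul_nonneg hΨ0 (Real.exp_pos _).le
  set c1 := (1 / hbar) * (μB * g * γ * cS * B) with hc1def
  have hc10 : 0 ≤ c1 := by
    apply mul_nonneg (by positivity)
    exact mul_nonneg (mul_nonneg (mul_nonneg hμg hγ.le) hcS0) hB0
  have hexpT : 1 ≤ Real.exp (K1 * T) :=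
    Real.one_le_exp (mul_nonneg hK1.le hT.le)
  set C0 := Real.sqrt n * c1 / K1 * (Real.exp (K1 * T) - 1) with hC0def
  have hC00 : 0 ≤ C0 := by
    apply mul_nonneg (div_nonneg (mul_nonneg (Real.sqrt_nonneg _) hc10) hK1.le)
    linarith
  refine ⟨C0 + 1, by linarith, ?_⟩
  intro u δu hu hud ψ ψb hψ hψb l t ht
  haveI : IsFiniteMeasure (volume.restrict (Set.Ioc (0:ℝ) T)) := by
    constructor
    rw [Measure.restrict_apply_univ, Real.volume_Ioc]
    exact ENNReal.ofReal_lt_top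
  have hui : IntegrableOn u (Set.Ioc 0 T) volume := hu.1.integrable one_le_two
  have hudi : IntegrableOn (u + δu) (Set.Ioc 0 T) volume := hud.1.integrable one_le_two
  have hδℒ : MemLp δu 2 (volume.restrict (Set.Ioc (0:ℝ) T)) := by
    have := hud.1.sub hu.1
    simpa [add_sub_cancel_left] using this
  have hδi : IntegrableOn δu (Set.Ioc 0 T) volume := hδℒ.integrable one_le_two
  have hbu : ∀ᵐ τ ∂(volume.restrict (Set.Ioc (0:ℝ) T)), ‖u τ‖ ≤ ρ :=
    hu.2.mono fun τ h => Stmt3Aux.norm_le_of_inBox h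
  have hbud : ∀ᵐ τ ∂(volume.restrict (Set.Ioc (0:ℝ) T)), ‖(u + δu) τ‖ ≤ ρ :=
    hud.2.mono fun τ h => Stmt3Aux.norm_le_of_inBox h
  set I := ∫ τ in Set.Ioc (0:ℝ) T, ‖δu τ‖ with hIdef
  have hI0 : 0 ≤ I := integral_nonneg fun τ => norm_nonneg _
  -- bound on the Hamiltonian along any admissible trajectory
  have hHamB : ∀ (w : ℝ → E3), IntegrableOn w (Set.Ioc 0 T) volume →
      (∀ᵐ τ ∂(volume.restrict (Set.Ioc (0:ℝ) T)), ‖w τ‖ ≤ ρ) →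
      ∀ x ∈ Set.Icc (0:ℝ) T,
        Stmt3Aux.mbound (Ham μB g kS kT S1 S2 Hhfi PS PT (vfield γ v0 w x)) ≤ M0 := by
    intro w hw hwb x hx
    refine le_trans (Stmt3Aux.mbound_Ham_le hμg kS kT S1 S2 Hhfi PS PT _) ?_
    have hv := Stmt3Aux.vfield_norm_le hγ hT hρ0 v0 hw hwb hx.1 hx.2
    have hmul : μB * g * ‖vfield γ v0 w x‖ * cS ≤ μB * g * Vb * cS := by
      refine mul_le_mul_of_nonneg_right ?_ hcS0
      exact mul_le_mul_of_nonneg_left hv hμg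
    rw [hM0def]
    linarith
  -- norm of the right-hand side
  have hAnorm : ∀ (Mm : Matrix (Fin n) (Fin n) ℂ) (x : Fin n → ℂ),
      ‖(-Complex.I / (hbar : ℂ)) • Mm.mulVec x‖ ≤ (1 / hbar) * (Stmt3Aux.mbound Mm * ‖x‖) := by
    intro Mm x
    rw [norm_smul, Stmt3Aux.norm_neg_I_div hhbar]
    exact mul_le_mul_of_nonneg_left (Stmt3Aux.norm_mulVec_le _ _) (by positivity)
  -- a priori bound on ψb
  have hψbB : ∀ x ∈ Set.Icc (0:ℝ) T, ‖ψb l x‖ ≤ B := by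
    rw [hBdef]
    refine Stmt3Aux.apriori_bound hK1 (fun x => (hψb l).2 x) ?_ ?_
    · intro x hx
      refine le_trans (hAnorm _ _) ?_
      have h1 := hHamB _ hudi hbud x ⟨hx.1, hx.2.le⟩
      have h2 : (1 / hbar) * (Stmt3Aux.mbound
            (Ham μB g kS kT S1 S2 Hhfi PS PT (vfield γ v0 (u + δu) x)) * ‖ψb l x‖)
          ≤ (1 / hbar) * (M0 * ‖ψb l x‖) := by
        refine mul_le_mul_of_nonneg_left ?_ (by positivity)
        exact mul_le_mul_of_nonneg_right h1 (norm_nonneg _)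
      refine h2.trans ?_
      rw [hK1def]
      nlinarith [norm_nonneg (ψb l x)]
    · rw [(hψb l).1, hΨdef]
      exact Finset.single_le_sum (f := fun l => ‖ψT l‖) (fun _ _ => norm_nonneg _)
        (Finset.mem_univ l)
  -- bound on the difference of vfields
  have hdiffv : ∀ x, 0 ≤ x → x ≤ T →
      ‖vfield γ v0 (u + δu) x - vfield γ v0 u x‖ ≤ γ * I := by
    intro x hx0 hxT
    rw [Stmt3Aux.vfield_sub hγ hui hδi v0 hxT, norm_smul, Real.norm_eq_abs,
      abs_of_pos (Real.exp_pos _)]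
    have hw := Stmt3Aux.weighted_norm_int_le hγ hxT hδi
    have he : Real.exp (-(γ * x)) * Real.exp (γ * x) = 1 := by
      rw [← Real.exp_add]; simp
    calc Real.exp (-(γ * x)) * ‖∫ τ in Set.Ioc (0:ℝ) x, (γ * Real.exp (γ * τ)) • δu τ‖
        ≤ Real.exp (-(γ * x)) * (γ * Real.exp (γ * x) * I) :=
          mul_le_mul_of_nonneg_left hw (Real.exp_pos _).le
      _ = γ * I := by
          rw [show Real.exp (-(γ * x)) * (γ * Real.exp (γ * x) * I)
              = (Real.exp (-(γ * x)) * Real.exp (γ * x)) * (γ * I) from by ring, he, one_mul]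
  -- the difference of trajectories
  have hd : ∀ x, HasDerivAt (fun τ => ψb l τ - ψ l τ)
      ((-Complex.I / (hbar : ℂ)) •
          (Ham μB g kS kT S1 S2 Hhfi PS PT (vfield γ v0 (u + δu) x)).mulVec (ψb l x)
        - (-Complex.I / (hbar : ℂ)) •
          (Ham μB g kS kT S1 S2 Hhfi PS PT (vfield γ v0 u x)).mulVec (ψ l x)) x :=
    fun x => ((hψb l).2 x).sub ((hψ l).2 x)
  have hrw : ∀ x,
      (-Complex.I / (hbar : ℂ)) •
          (Ham μB g kS kT S1 S2 Hhfi PS PT (vfield γ v0 (u + δu) x)).mulVec (ψb l x)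
        - (-Complex.I / (hbar : ℂ)) •
          (Ham μB g kS kT S1 S2 Hhfi PS PT (vfield γ v0 u x)).mulVec (ψ l x)
      = (-Complex.I / (hbar : ℂ)) •
          (Ham μB g kS kT S1 S2 Hhfi PS PT (vfield γ v0 u x)).mulVec (ψb l x - ψ l x)
        + (-Complex.I / (hbar : ℂ)) •
          (HZmat μB g S1 S2 (vfield γ v0 (u + δu) x - vfield γ v0 u x)).mulVec (ψb l x) := by
    intro x
    have hH : Ham μB g kS kT S1 S2 Hhfi PS PT (vfield γ v0 (u + δu) x)
        = Ham μB g kS kT S1 S2 Hhfi PS PT (vfield γ v0 u x)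
          + HZmat μB g S1 S2 (vfield γ v0 (u + δu) x - vfield γ v0 u x) := by
      rw [← Stmt3Aux.Ham_sub μB g kS kT S1 S2 Hhfi PS PT (vfield γ v0 (u + δu) x)
        (vfield γ v0 u x)]
      abel
    rw [hH, Matrix.add_mulVec, smul_add, Matrix.mulVec_sub, smul_sub]
    abel
  -- Gronwall for the difference
  have hdb : ∀ x ∈ Set.Ico (0:ℝ) T,
      ‖((-Complex.I / (hbar : ℂ)) •
          (Ham μB g kS kT S1 S2 Hhfi PS PT (vfield γ v0 (u + δu) x)).mulVec (ψb l x)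
        - (-Complex.I / (hbar : ℂ)) •
          (Ham μB g kS kT S1 S2 Hhfi PS PT (vfield γ v0 u x)).mulVec (ψ l x))‖
      ≤ K1 * ‖ψb l x - ψ l x‖ + c1 * I := by
    intro x hx
    rw [hrw x]
    refine le_trans (norm_add_le _ _) ?_
    have h1 : ‖(-Complex.I / (hbar : ℂ)) •
        (Ham μB g kS kT S1 S2 Hhfi PS PT (vfield γ v0 u x)).mulVec (ψb l x - ψ l x)‖
        ≤ K1 * ‖ψb l x - ψ l x‖ := by
      refine le_trans (hAnorm _ _) ?_
      have hm := hHamB _ hui hbu x ⟨hx.1, hx.2.le⟩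
      have : (1 / hbar) * (Stmt3Aux.mbound
            (Ham μB g kS kT S1 S2 Hhfi PS PT (vfield γ v0 u x)) * ‖ψb l x - ψ l x‖)
          ≤ (1 / hbar) * (M0 * ‖ψb l x - ψ l x‖) := by
        refine mul_le_mul_of_nonneg_left ?_ (by positivity)
        exact mul_le_mul_of_nonneg_right hm (norm_nonneg _)
      refine this.trans ?_
      rw [hK1def]
      nlinarith [norm_nonneg (ψb l x - ψ l x)]
    have h2 : ‖(-Complex.I / (hbar : ℂ)) •
        (HZmat μB g S1 S2 (vfield γ v0 (u + δu) x - vfield γ v0 u x)).mulVec (ψb l x)‖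
        ≤ c1 * I := by
      refine le_trans (hAnorm _ _) ?_
      have hΔ := hdiffv x hx.1 hx.2.le
      have hz : Stmt3Aux.mbound
            (HZmat μB g S1 S2 (vfield γ v0 (u + δu) x - vfield γ v0 u x))
          ≤ μB * g * (γ * I) * cS := by
        refine le_trans (Stmt3Aux.mbound_HZ hμg S1 S2 _) ?_
        rw [hcSdef]
        refine mul_le_mul_of_nonneg_right ?_ hcS0
        exact mul_le_mul_of_nonneg_left hΔ hμg
      have hψbx := hψbB x ⟨hx.1, hx.2.le⟩
      calc (1 / hbar) * (Stmt3Aux.mbound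
            (HZmat μB g S1 S2 (vfield γ v0 (u + δu) x - vfield γ v0 u x)) * ‖ψb l x‖)
          ≤ (1 / hbar) * ((μB * g * (γ * I) * cS) * B) := by
            refine mul_le_mul_of_nonneg_left ?_ (by positivity)
            exact mul_le_mul hz hψbx (norm_nonneg _)
              (mul_nonneg (mul_nonneg hμg (mul_nonneg hγ.le hI0)) hcS0)
        _ = c1 * I := by rw [hc1def]; ring
    linarith
  have h0 : (fun τ => ψb l τ - ψ l τ) 0 = 0 := by
    simp only [(hψb l).1, (hψ l).1, sub_self]
  have hmain := Stmt3Aux.grow_bound hK1 (mul_nonneg hc10 hI0) hd hdb h0 t ht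
  -- conclude
  have hcn : cNorm (ψb l t - ψ l t) ≤ Real.sqrt n * ‖ψb l t - ψ l t‖ := by
    unfold cNorm
    exact Stmt3Aux.cNorm_le_sqrt_mul _
  calc cNorm (ψb l t - ψ l t)
      ≤ Real.sqrt n * ‖ψb l t - ψ l t‖ := hcn
    _ ≤ Real.sqrt n * (c1 * I / K1 * (Real.exp (K1 * T) - 1)) := by
        refine mul_le_mul_of_nonneg_left ?_ (Real.sqrt_nonneg _)
        simpa using hmain
    _ = C0 * I := by rw [hC0def]; ring
    _ ≤ (C0 + 1) * I := by nlinarith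
end
end

section
/- For all u ∈ 𝒱 and δu ∈ L²((0,T); ℝ³) with u + δu ∈ 𝒱, writing δψ^l(t) := ψ^l(t; u + δu) − ψ^l(t; u) and δv(t) := v(t; u + δu) − v(t; u), the following duality identity holds for each l = 1, …, s: (k_S/2) ∫₀ᵀ Re ⟨ψ^l(t; u), P_S δψ^l(t)⟩ dt = ∫₀ᵀ Im ⟨χ^l(t; u), H_Z(δv(t)) ψ^l(t; u)⟩ dt + ∫₀ᵀ Im ⟨χ^l(t; u), H_Z(δv(t)) δψ^l(t)⟩ dt. -/
open MeasureTheory Set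

noncomputable section

/-! ### Auxiliary lemmas for the duality identity -/

section DualityAux

lemma hasDerivAt_cInner {n : ℕ} {f g : ℝ → Fin n → ℂ} {f' g' : Fin n → ℂ} {t : ℝ}
    (hf : HasDerivAt f f' t) (hg : HasDerivAt g g' t) :
    HasDerivAt (fun t => cInner (f t) (g t)) (cInner f' (g t) + cInner (f t) g') t := by
  unfold cInner
  rw [← Finset.sum_add_distrib]
  apply HasDerivAt.fun_sum
  intro j _
  have hfj : HasDerivAt (fun x => f x j) (f' j) t := hasDerivAt_pi.mp hf j
  have hgj : HasDerivAt (fun x => g x j) (g' j) t := hasDerivAt_pi.mp hg j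
  simpa only [starRingEnd_apply] using hfj.star.fun_mul hgj

open Matrix in
lemma cInner_mulVec_left {n : ℕ} (A : Matrix (Fin n) (Fin n) ℂ) (a b : Fin n → ℂ) :
    cInner (A.mulVec a) b = cInner a (Aᴴ.mulVec b) := by
  unfold cInner
  simp only [Matrix.mulVec, dotProduct, Matrix.conjTranspose_apply, map_sum,
    _root_.map_mul, Finset.sum_mul, Finset.mul_sum]
  rw [Finset.sum_comm]
  congr 1; ext j; congr 1; ext k
  simp only [starRingEnd_apply]
  ring

@[simp] lemma cInner_smul_left {n : ℕ} (c : ℂ) (a b : Fin n → ℂ) :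
    cInner (c • a) b = (starRingEnd ℂ) c * cInner a b := by
  unfold cInner; simp [Finset.mul_sum, mul_assoc]

@[simp] lemma cInner_smul_right {n : ℕ} (c : ℂ) (a b : Fin n → ℂ) :
    cInner a (c • b) = c * cInner a b := by
  unfold cInner; simp [Finset.mul_sum]; congr 1; ext j; ring

@[simp] lemma cInner_sub_left {n : ℕ} (a a' b : Fin n → ℂ) :
    cInner (a - a') b = cInner a b - cInner a' b := by
  unfold cInner; simp [sub_mul, Finset.sum_sub_distrib]

@[simp] lemma cInner_sub_right {n : ℕ} (a b b' : Fin n → ℂ) :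
    cInner a (b - b') = cInner a b - cInner a b' := by
  unfold cInner; simp [mul_sub, Finset.sum_sub_distrib]

@[simp] lemma cInner_add_right {n : ℕ} (a b b' : Fin n → ℂ) :
    cInner a (b + b') = cInner a b + cInner a b' := by
  unfold cInner; simp [mul_add, Finset.sum_add_distrib]

@[simp] lemma cInner_zero_left {n : ℕ} (b : Fin n → ℂ) : cInner 0 b = 0 := by
  unfold cInner; simp

@[simp] lemma cInner_zero_right {n : ℕ} (a : Fin n → ℂ) : cInner a 0 = 0 := by
  unfold cInner; simp

open Matrix in
lemma hamStar_conjT {n : ℕ} (μB g kS kT : ℝ)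
    (S1 S2 : Fin 3 → Matrix (Fin n) (Fin n) ℂ) (Hhfi PS PT : Matrix (Fin n) (Fin n) ℂ)
    (hS1 : ∀ i, (S1 i).IsHermitian) (hS2 : ∀ i, (S2 i).IsHermitian)
    (hHhfi : Hhfi.IsHermitian) (hPS : PS.IsHermitian) (hPT : PT.IsHermitian) (v : E3) :
    (HamStar μB g kS kT S1 S2 Hhfi PS PT v)ᴴ = Ham μB g kS kT S1 S2 Hhfi PS PT v := by
  have hHZ : (HZmat μB g S1 S2 v)ᴴ = HZmat μB g S1 S2 v := by
    unfold HZmat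
    rw [conjTranspose_smul]
    rw [show (∑ i, ((v i : ℝ) : ℂ) • (S1 i + S2 i))ᴴ = ∑ i, (((v i : ℝ) : ℂ) • (S1 i + S2 i))ᴴ
      from Matrix.conjTranspose_sum _ _]
    simp only [conjTranspose_smul, conjTranspose_add, (hS1 _).eq, (hS2 _).eq,
      Complex.star_def, Complex.conj_ofReal]
  have hK : (Kmat kS kT PS PT)ᴴ = Kmat kS kT PS PT := by
    unfold Kmat
    simp only [conjTranspose_smul, conjTranspose_add, hPS.eq, hPT.eq, Complex.star_def,
      Complex.conj_ofReal, map_div₀, _root_.map_one, map_ofNat]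
  unfold HamStar Ham
  simp only [conjTranspose_add, conjTranspose_smul, hHZ, hK, hHhfi.eq, Complex.star_def,
    Complex.conj_I]
  module

lemma ham_add_HZ {n : ℕ} (μB g kS kT : ℝ)
    (S1 S2 : Fin 3 → Matrix (Fin n) (Fin n) ℂ) (Hhfi PS PT : Matrix (Fin n) (Fin n) ℂ)
    (v w : E3) :
    Ham μB g kS kT S1 S2 Hhfi PS PT w =
      Ham μB g kS kT S1 S2 Hhfi PS PT v + HZmat μB g S1 S2 (w - v) := by
  unfold Ham HZmat
  have : ∀ i : Fin 3, (((w - v) i : ℝ) : ℂ) = ((w i : ℝ) : ℂ) - ((v i : ℝ) : ℂ) := by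
    intro i
    simp [PiLp.sub_apply]
  simp only [this, sub_smul, Finset.sum_sub_distrib, smul_sub]
  module

lemma vfield_contOn {T : ℝ} (hT : 0 < T) (γ : ℝ) (hγ : 0 < γ) {lo hi : Fin 3 → ℝ}
    (v0 : E3) {u : ℝ → E3} (hu : Adm T lo hi u) :
    ContinuousOn (vfield γ v0 u) (Icc 0 T) := by
  have hfin : IsFiniteMeasure (volume.restrict (Set.Ioc (0:ℝ) T)) := by
    constructor
    rw [Measure.restrict_apply_univ, Real.volume_Ioc]
    exact ENNReal.ofReal_lt_top
  have huint : IntegrableOn u (Set.Ioc (0:ℝ) T) volume := by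
    exact MemLp.integrable (by norm_num) hu.1
  have hfint : IntegrableOn (fun τ => (γ * Real.exp (γ * τ)) • u τ) (Set.Ioc (0:ℝ) T) volume := by
    apply Integrable.mono' (huint.norm.const_mul (γ * Real.exp (γ * T)))
    · exact ((continuous_const.mul ((Real.continuous_exp.comp (continuous_const.mul
        continuous_id)))).aestronglyMeasurable).smul huint.aestronglyMeasurable
    · filter_upwards [ae_restrict_mem measurableSet_Ioc] with τ hτ
      rw [norm_smul]
      gcongr
      · rw [Real.norm_eq_abs, abs_of_pos (by positivity)]
        have : γ * τ ≤ γ * T := by nlinarith [hτ.2]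
        nlinarith [Real.exp_le_exp.mpr this, Real.exp_pos (γ * τ)]
  have hfIcc : IntegrableOn (fun τ => (γ * Real.exp (γ * τ)) • u τ) (Set.Icc (0:ℝ) T) volume := by
    rwa [IntegrableOn, Measure.restrict_congr_set Ioc_ae_eq_Icc] at hfint
  have hprim := intervalIntegral.continuousOn_primitive (a := (0:ℝ)) (b := T) hfIcc
  unfold vfield
  apply ContinuousOn.fun_smul
  · exact (Real.continuous_exp.comp (continuous_neg.comp
      (continuous_const.mul continuous_id))).continuousOn
  · exact continuousOn_const.add hprim

lemma contOn_cInner_mulVec {n : ℕ} {s : Set ℝ} {f h : ℝ → Fin n → ℂ}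
    {M : ℝ → Matrix (Fin n) (Fin n) ℂ}
    (hf : ContinuousOn f s) (hM : ∀ j k, ContinuousOn (fun t => M t j k) s)
    (hh : ContinuousOn h s) :
    ContinuousOn (fun t => cInner (f t) ((M t).mulVec (h t))) s := by
  unfold cInner
  apply continuousOn_finset_sum
  intro j _
  apply ContinuousOn.mul
  · exact Complex.continuous_conj.comp_continuousOn ((continuous_apply j).comp_continuousOn hf)
  · simp only [Matrix.mulVec, dotProduct]
    apply continuousOn_finset_sum
    intro k _
    exact (hM j k).mul ((continuous_apply k).comp_continuousOn hh)

lemma contOn_HZ_entry {n : ℕ} (μB g : ℝ) (S1 S2 : Fin 3 → Matrix (Fin n) (Fin n) ℂ)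
    {s : Set ℝ} {w : ℝ → E3} (hw : ContinuousOn w s) (j k : Fin n) :
    ContinuousOn (fun t => HZmat μB g S1 S2 (w t) j k) s := by
  unfold HZmat
  simp only [Matrix.smul_apply, Matrix.sum_apply, smul_eq_mul]
  apply ContinuousOn.mul continuousOn_const
  apply continuousOn_finset_sum
  intro i _
  apply ContinuousOn.mul
  · exact Complex.continuous_ofReal.comp_continuousOn
      ((EuclideanSpace.proj (𝕜 := ℝ) i).continuous.comp_continuousOn hw)
  · exact continuousOn_const

lemma deriv_value {n : ℕ} (hbar kS : ℝ) (hb : (hbar : ℂ) ≠ 0)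
    (Hm Hs ΔH PS : Matrix (Fin n) (Fin n) ℂ) (hHs : Hs.conjTranspose = Hm)
    (hPS : PS.conjTranspose = PS) (a p q : Fin n → ℂ) :
    cInner ((-Complex.I / (hbar : ℂ)) •
        (Hs.mulVec a - (Complex.I * ((kS : ℂ) / 2)) • PS.mulVec p)) (q - p)
      + cInner a ((-Complex.I / (hbar : ℂ)) • (Hm + ΔH).mulVec q
          - (-Complex.I / (hbar : ℂ)) • Hm.mulVec p)
    = ((-(kS / (2 * hbar)) : ℝ) : ℂ) * cInner p (PS.mulVec (q - p))
      + (-Complex.I / (hbar : ℂ)) *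
          (cInner a (ΔH.mulVec p) + cInner a (ΔH.mulVec (q - p))) := by
  have hq : cInner a (ΔH.mulVec p) + cInner a (ΔH.mulVec (q - p)) = cInner a (ΔH.mulVec q) := by
    rw [← cInner_add_right, ← Matrix.mulVec_add]
    have harg : p + (q - p) = q := by abel
    rw [harg]
  rw [hq]
  simp only [cInner_smul_left, cInner_smul_right, cInner_sub_left, cInner_sub_right,
    cInner_add_right, Matrix.add_mulVec, Matrix.mulVec_sub, cInner_mulVec_left, hHs, hPS,
    map_div₀, map_neg, _root_.map_mul, Complex.conj_I, Complex.conj_ofReal, map_ofNat,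
    Complex.ofReal_neg, Complex.ofReal_div, Complex.ofReal_mul, Complex.ofReal_ofNat]
  field_simp
  ring_nf
  simp only [Complex.I_sq]
  ring

lemma re_formula (hbar kS : ℝ) (hb : hbar ≠ 0) (X Y1 Y2 : ℂ) :
    hbar * ((((-(kS / (2 * hbar)) : ℝ)) : ℂ) * X
        + (-Complex.I / (hbar : ℂ)) * (Y1 + Y2)).re
      = -(kS / 2) * X.re + (Y1.im + Y2.im) := by
  have h1 : (-Complex.I / (hbar : ℂ)) * (Y1 + Y2)
      = ((hbar⁻¹ : ℝ) : ℂ) * (-Complex.I * (Y1 + Y2)) := by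
    push_cast
    field_simp
  rw [h1, Complex.add_re, Complex.re_ofReal_mul, Complex.re_ofReal_mul]
  have h2 : (-Complex.I * (Y1 + Y2)).re = Y1.im + Y2.im := by
    simp [Complex.add_im]
  rw [h2]
  field_simp

end DualityAux
/-- duality identity relating state increment and adjoint trajectory. -/
theorem stmt_6
    {n s : ℕ} (hs : 0 < s)
    (T γ hbar μB g kS kT : ℝ) (hT : 0 < T) (hγ : 0 < γ) (hhbar : 0 < hbar)
    (hμB : 0 < μB) (hg : 0 < g) (hkS : 0 < kS) (hkT : 0 < kT)
    (S1 S2 : Fin 3 → Matrix (Fin n) (Fin n) ℂ) (Hhfi PS PT : Matrix (Fin n) (Fin n) ℂ)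
    (hS1 : ∀ i, (S1 i).IsHermitian) (hS2 : ∀ i, (S2 i).IsHermitian)
    (hHhfi : Hhfi.IsHermitian) (hPS : PS.IsHermitian) (hPT : PT.IsHermitian)
    (lo hi : Fin 3 → ℝ) (hbox : ∀ i, lo i ≤ hi i)
    (v0 : E3) (ψT : Fin s → Fin n → ℂ) :
    ∀ u δu : ℝ → E3, Adm T lo hi u → Adm T lo hi (u + δu) →
      ∀ ψ ψb χ : Fin s → ℝ → Fin n → ℂ,
        SchroSol γ hbar μB g kS kT S1 S2 Hhfi PS PT v0 ψT u ψ →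
        SchroSol γ hbar μB g kS kT S1 S2 Hhfi PS PT v0 ψT (u + δu) ψb →
        AdjSol T γ hbar μB g kS kT S1 S2 Hhfi PS PT v0 u ψ χ →
        ∀ l, (kS / 2) * ∫ t in (0:ℝ)..T, (cInner (ψ l t) (PS.mulVec (ψb l t - ψ l t))).re =
          (∫ t in (0:ℝ)..T,
            (cInner (χ l t) ((HZmat μB g S1 S2 (vfield γ v0 (u + δu) t - vfield γ v0 u t)).mulVec (ψ l t))).im) +
          ∫ t in (0:ℝ)..T,
            (cInner (χ l t) ((HZmat μB g S1 S2 (vfield γ v0 (u + δu) t - vfield γ v0 u t)).mulVec (ψb l t - ψ l t))).im := by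
  intro u δu hu hub ψ ψb χ hψ hψb hχ l
  have hbc : (hbar : ℂ) ≠ 0 := Complex.ofReal_ne_zero.mpr hhbar.ne'
  obtain ⟨hψ0, hψd⟩ := hψ l
  obtain ⟨hψb0, hψbd⟩ := hψb l
  obtain ⟨hχT, hχd⟩ := hχ l
  -- continuity of the trajectories
  have hpc : Continuous (ψ l) := continuous_iff_continuousAt.mpr fun t => (hψd t).continuousAt
  have hqc : Continuous (ψb l) := continuous_iff_continuousAt.mpr fun t => (hψbd t).continuousAt
  have hac : Continuous (χ l) := continuous_iff_continuousAt.mpr fun t => (hχd t).continuousAt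
  -- continuity of δv and of the entries of HZ(δv)
  have hδv : ContinuousOn (fun t => vfield γ v0 (u + δu) t - vfield γ v0 u t) (Icc 0 T) :=
    (vfield_contOn hT γ hγ v0 hub).sub (vfield_contOn hT γ hγ v0 hu)
  have hΔH : ∀ j k, ContinuousOn
      (fun t => HZmat μB g S1 S2 (vfield γ v0 (u + δu) t - vfield γ v0 u t) j k) (Icc 0 T) :=
    fun j k => contOn_HZ_entry μB g S1 S2 hδv j k
  -- the three integrands
  set Xf : ℝ → ℝ := fun t => (cInner (ψ l t) (PS.mulVec (ψb l t - ψ l t))).re with hXf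
  set Y1f : ℝ → ℝ := fun t => (cInner (χ l t)
    ((HZmat μB g S1 S2 (vfield γ v0 (u + δu) t - vfield γ v0 u t)).mulVec (ψ l t))).im with hY1f
  set Y2f : ℝ → ℝ := fun t => (cInner (χ l t)
    ((HZmat μB g S1 S2 (vfield γ v0 (u + δu) t - vfield γ v0 u t)).mulVec
      (ψb l t - ψ l t))).im with hY2f
  -- continuity of the integrands on [0,T]
  have hXc : ContinuousOn Xf (Icc 0 T) :=
    Complex.continuous_re.comp_continuousOn
      (contOn_cInner_mulVec hpc.continuousOn (fun _ _ => continuousOn_const)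
        (hqc.sub hpc).continuousOn)
  have hY1c : ContinuousOn Y1f (Icc 0 T) :=
    Complex.continuous_im.comp_continuousOn
      (contOn_cInner_mulVec hac.continuousOn hΔH hpc.continuousOn)
  have hY2c : ContinuousOn Y2f (Icc 0 T) :=
    Complex.continuous_im.comp_continuousOn
      (contOn_cInner_mulVec hac.continuousOn hΔH (hqc.sub hpc).continuousOn)
  have huIcc : uIcc (0:ℝ) T = Icc 0 T := uIcc_of_le hT.le
  have hXi : IntervalIntegrable Xf volume 0 T := by
    apply ContinuousOn.intervalIntegrable; rwa [huIcc]
  have hY1i : IntervalIntegrable Y1f volume 0 T := by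
    apply ContinuousOn.intervalIntegrable; rwa [huIcc]
  have hY2i : IntervalIntegrable Y2f volume 0 T := by
    apply ContinuousOn.intervalIntegrable; rwa [huIcc]
  -- the pointwise derivative identity
  have hderiv : ∀ t : ℝ, HasDerivAt
      (fun t => hbar * (cInner (χ l t) (ψb l t - ψ l t)).re)
      (-(kS / 2) * Xf t + (Y1f t + Y2f t)) t := by
    intro t
    have hd := hasDerivAt_cInner (hχd t) ((hψbd t).sub (hψd t))
    simp only [Pi.sub_apply] at hd
    rw [ham_add_HZ μB g kS kT S1 S2 Hhfi PS PT (vfield γ v0 u t)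
      (vfield γ v0 (u + δu) t)] at hd
    rw [deriv_value hbar kS hbc _ _ _ _
      (hamStar_conjT μB g kS kT S1 S2 Hhfi PS PT hS1 hS2 hHhfi hPS hPT (vfield γ v0 u t))
      hPS.eq (χ l t) (ψ l t) (ψb l t)] at hd
    have hre := Complex.reCLM.hasFDerivAt.comp_hasDerivAt t hd
    have h2 := hre.const_mul hbar
    have h3 := re_formula hbar kS hhbar.ne'
      (cInner (ψ l t) (PS.mulVec (ψb l t - ψ l t)))
      (cInner (χ l t)
        ((HZmat μB g S1 S2 (vfield γ v0 (u + δu) t - vfield γ v0 u t)).mulVec (ψ l t)))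
      (cInner (χ l t)
        ((HZmat μB g S1 S2 (vfield γ v0 (u + δu) t - vfield γ v0 u t)).mulVec
          (ψb l t - ψ l t)))
    rw [hXf, hY1f, hY2f]
    simp only
    rw [← h3]
    exact h2
  -- fundamental theorem of calculus
  have hint : IntervalIntegrable (fun t => -(kS / 2) * Xf t + (Y1f t + Y2f t)) volume 0 T :=
    (hXi.const_mul _).add (hY1i.add hY2i)
  have key := intervalIntegral.integral_eq_sub_of_hasDerivAt
    (f := fun t => hbar * (cInner (χ l t) (ψb l t - ψ l t)).re)
    (fun t _ => hderiv t) hint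
  -- the boundary terms vanish
  have hbT : cInner (χ l T) (ψb l T - ψ l T) = 0 := by rw [hχT]; simp
  have hb0 : cInner (χ l 0) (ψb l 0 - ψ l 0) = 0 := by rw [hψ0, hψb0, sub_self]; simp
  simp only [hbT, hb0, Complex.zero_re, mul_zero, sub_zero, sub_self] at key
  -- split the integral
  rw [intervalIntegral.integral_add (hXi.const_mul _) (hY1i.add hY2i),
    intervalIntegral.integral_add hY1i hY2i, intervalIntegral.integral_const_mul] at key
  linarith
end
end

section
/- (Equivalence of the integral and pointwise maximum conditions) Let σ : [0,T] → ℝ³ be continuous and let u* ∈ 𝒱 satisfy ∫₀ᵀ ⟨σ(t), u(t)⟩_{ℝ³} dt ≤ ∫₀ᵀ ⟨σ(t), u*(t)⟩_{ℝ³} dt for every u ∈ 𝒱. Then for almost every t ∈ [0,T] one has ⟨σ(t), u*(t)⟩_{ℝ³} = max_{w ∈ V} ⟨σ(t), w⟩_{ℝ³}. -/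
open MeasureTheory Set

noncomputable section

/-- the bang-bang control maximizing `⟨σ t, ·⟩` over the box, pointwise. -/
def uopt (lo hi : Fin 3 → ℝ) (σ : ℝ → E3) (t : ℝ) : E3 :=
  WithLp.toLp 2 (fun i => if 0 ≤ σ t i then hi i else lo i : Fin 3 → ℝ)

lemma abs_coord_le_norm (x : E3) (i : Fin 3) : |x i| ≤ ‖x‖ := by
  rw [EuclideanSpace.norm_eq, ← Real.sqrt_sq_eq_abs]
  apply Real.sqrt_le_sqrt
  have := Finset.single_le_sum (f := fun j => ‖x j‖ ^ 2)
    (fun j _ => sq_nonneg _) (Finset.mem_univ i)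
  simpa [Real.norm_eq_abs, sq_abs] using this

lemma uopt_mem (lo hi : Fin 3 → ℝ) (hbox : ∀ i, lo i ≤ hi i) (σ : ℝ → E3) (t : ℝ) :
    inBox lo hi (uopt lo hi σ t) := by
  intro i
  simp only [uopt, PiLp.toLp_apply]
  split <;> constructor <;> first | exact le_refl _ | exact hbox i

lemma uopt_max (lo hi : Fin 3 → ℝ) (σ : ℝ → E3) (t : ℝ) (w : E3)
    (hw : inBox lo hi w) :
    ∑ i, σ t i * w i ≤ ∑ i, σ t i * uopt lo hi σ t i := by
  apply Finset.sum_le_sum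
  intro i _
  simp only [uopt, PiLp.toLp_apply]
  by_cases h : 0 ≤ σ t i
  · simp only [h, if_true]
    exact mul_le_mul_of_nonneg_left (hw i).2 h
  · simp only [h, if_false]
    exact mul_le_mul_of_nonpos_left (hw i).1 (le_of_not_ge h)

/-- equivalence of the integral and pointwise maximum conditions. -/
theorem stmt_19 (T : ℝ) (hT : 0 < T) (lo hi : Fin 3 → ℝ) (hbox : ∀ i, lo i ≤ hi i)
    (σ : ℝ → E3) (hσ : ContinuousOn σ (Set.Icc 0 T))
    (ustar : ℝ → E3) (hstar : Adm T lo hi ustar)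
    (hmax : ∀ u : ℝ → E3, Adm T lo hi u →
      (∫ t in (0:ℝ)..T, ∑ i, σ t i * u t i) ≤ ∫ t in (0:ℝ)..T, ∑ i, σ t i * ustar t i) :
    ∀ᵐ t ∂(volume.restrict (Set.Icc (0:ℝ) T)),
      IsGreatest ((fun w : E3 => ∑ i, σ t i * w i) '' {w | inBox lo hi w})
        (∑ i, σ t i * ustar t i) := by
  set μ := volume.restrict (Set.Ioc (0:ℝ) T) with hμ
  have hμfin : IsFiniteMeasure μ := by
    rw [hμ]; exact ⟨by simp [Real.volume_Ioc]⟩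
  -- σ is a.e. strongly measurable w.r.t. μ
  have hσIoc : ContinuousOn σ (Set.Ioc 0 T) := hσ.mono Set.Ioc_subset_Icc_self
  have hσm : AEStronglyMeasurable σ μ := by
    rw [hμ]
    exact (hσIoc.aestronglyMeasurable measurableSet_Ioc)
  have hσim : ∀ i, AEMeasurable (fun t => σ t i) μ := fun i =>
    ((EuclideanSpace.proj (𝕜 := ℝ) i).continuous.measurable.comp_aemeasurable hσm.aemeasurable)
  -- admissibility of uopt
  have hφ : Measurable (fun x : E3 => (WithLp.toLp 2 (fun i => if 0 ≤ x i then hi i else lo i : Fin 3 → ℝ) : E3)) := by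
    refine (PiLp.continuous_toLp (p := 2) (β := fun _ : Fin 3 => ℝ)).measurable.comp ?_
    apply measurable_pi_iff.2
    intro i
    exact Measurable.ite (measurableSet_le measurable_const (EuclideanSpace.proj (𝕜 := ℝ) i).continuous.measurable)
      measurable_const measurable_const
  have huoptm : AEStronglyMeasurable (uopt lo hi σ) μ :=
    (hφ.comp_aemeasurable hσm.aemeasurable).aestronglyMeasurable
  have hC : ∀ t, ‖uopt lo hi σ t‖ ≤ Real.sqrt (∑ i, max ((lo i)^2) ((hi i)^2)) := by
    intro t
    rw [EuclideanSpace.norm_eq]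
    apply Real.sqrt_le_sqrt
    apply Finset.sum_le_sum
    intro i _
    rw [Real.norm_eq_abs, sq_abs]
    simp only [uopt, PiLp.toLp_apply]
    split
    · exact le_max_right _ _
    · exact le_max_left _ _
  have huopt : Adm T lo hi (uopt lo hi σ) := by
    refine ⟨MemLp.of_bound huoptm _ (Filter.Eventually.of_forall hC),
      Filter.Eventually.of_forall (fun t => uopt_mem lo hi hbox σ t)⟩
  -- the two scalar functions
  set f : ℝ → ℝ := fun t => ∑ i, σ t i * uopt lo hi σ t i with hf
  set g : ℝ → ℝ := fun t => ∑ i, σ t i * ustar t i with hg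
  -- bound on σ on Icc
  obtain ⟨C, hCσ⟩ := (isCompact_Icc (a := (0:ℝ)) (b := T)).exists_bound_of_continuousOn hσ
  have hσbd : ∀ᵐ t ∂μ, ∀ i, |σ t i| ≤ C := by
    rw [hμ]
    refine (ae_restrict_iff' measurableSet_Ioc).2 (Filter.Eventually.of_forall ?_)
    intro t ht i
    calc |σ t i| = |σ t i| := rfl
      _ = |σ t i| := rfl
      _ ≤ ‖σ t‖ := abs_coord_le_norm _ i
      _ ≤ C := hCσ t (Set.Ioc_subset_Icc_self ht)
  -- integrability
  have hint : ∀ (u : ℝ → E3), Adm T lo hi u → Integrable (fun t => ∑ i, σ t i * u t i) μ := by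
    intro u hu
    apply integrable_finset_sum
    intro i _
    have hui : Integrable (fun t => u t i) μ := by
      have : MemLp u 1 μ := (hu.1).mono_exponent (by norm_num)
      have hu1 : Integrable u μ := memLp_one_iff_integrable.1 this
      exact (EuclideanSpace.proj (𝕜 := ℝ) i).integrable_comp hu1
    apply Integrable.bdd_mul (c := C) hui
      ((EuclideanSpace.proj (𝕜 := ℝ) i).continuous.measurable.comp_aemeasurable hσm.aemeasurable).aestronglyMeasurable
    filter_upwards [hσbd] with t ht
    exact ht i
  have hintf : Integrable f μ := hint _ huopt
  have hintg : Integrable g μ := hint _ hstar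
  -- a.e. pointwise inequality g ≤ f
  have hgef : ∀ᵐ t ∂μ, g t ≤ f t := by
    filter_upwards [hstar.2] with t ht
    exact uopt_max lo hi σ t (ustar t) ht
  -- integral inequality from hmax
  have hIle : ∫ t, f t ∂μ ≤ ∫ t, g t ∂μ := by
    have := hmax (uopt lo hi σ) huopt
    rwa [intervalIntegral.integral_of_le hT.le, intervalIntegral.integral_of_le hT.le] at this
  -- conclude f = g a.e.
  have hzero : ∫ t, (f t - g t) ∂μ = 0 := by
    rw [integral_sub hintf hintg]
    have h1 : ∫ t, g t ∂μ ≤ ∫ t, f t ∂μ := integral_mono_ae hintg hintf hgef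
    linarith
  have hfg : ∀ᵐ t ∂μ, f t = g t := by
    have h0 : (fun t => f t - g t) =ᵐ[μ] 0 :=
      (integral_eq_zero_iff_of_nonneg_ae
        (by filter_upwards [hgef] with t ht
            simpa using sub_nonneg.2 ht) (hintf.sub hintg)).1 hzero
    filter_upwards [h0] with t ht
    have h1 : f t - g t = 0 := ht
    linarith
  -- transport to Icc
  have hIcc : (volume.restrict (Set.Icc (0:ℝ) T)) = μ := by
    rw [hμ, Measure.restrict_congr_set Ioc_ae_eq_Icc]
  rw [hIcc]
  filter_upwards [hfg, hstar.2] with t ht htbox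
  have heq : g t = f t := ht.symm
  constructor
  · exact ⟨ustar t, htbox, rfl⟩
  · rintro y ⟨w, hw, rfl⟩
    calc ∑ i, σ t i * w i ≤ f t := uopt_max lo hi σ t w hw
      _ = g t := heq.symm
end
end
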